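/- Let c > 0 and define φ_c : ℝ → ℝ by φ_c(t) = |2c − |t − c|| − c. Then: (i) φ_c(t) = t for every t with |t| ≤ c; and (ii) for every M ≥ 0 there exists a natural number i₀ such that for every i ≥ i₀ and every t ∈ ℝ with |t| ≤ M, the i-th iterate satisfies |φ_c^{[i]}(t)| ≤ c. -/
import Mathlib

lemma key8 (c : ℝ) (hc : 0 < c) (t : ℝ) :
    abs (abs (2 * c - abs (t - c)) - c) ≤ max c (abs t - 2 * c) := by
  rcases abs_cases (t - c) with ⟨h1, h2⟩ | ⟨h1, h2⟩ <;>
  rcases abs_cases (2 * c - abs (t - c)) with ⟨h3, h4⟩ | ⟨h3, h4⟩ <;>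
  rcases abs_cases t with ⟨h5, h6⟩ | ⟨h5, h6⟩ <;>
  rcases abs_cases (abs (2 * c - abs (t - c)) - c) with ⟨h7, h8⟩ | ⟨h7, h8⟩ <;>
  simp only [le_max_iff] <;>
  first
  | (left; linarith)
  | (right; linarith)

theorem stmt8 (c : ℝ) (hc : 0 < c) :
    let φ : ℝ → ℝ := fun t => abs (2 * c - abs (t - c)) - c
    (∀ t : ℝ, abs t ≤ c → φ t = t) ∧
      (∀ M : ℝ, 0 ≤ M → ∃ i₀ : ℕ, ∀ i : ℕ, i₀ ≤ i → ∀ t : ℝ, abs t ≤ M →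
        abs (φ^[i] t) ≤ c) := by
  intro φ
  have hfix : ∀ t : ℝ, |t| ≤ c → φ t = t := by
    intro t ht
    rw [abs_le] at ht
    have h1 : |t - c| = c - t := by rw [abs_sub_comm, abs_of_nonneg] ; linarith
    simp only [φ, h1]
    rw [abs_of_nonneg (by linarith)]
    ring
  refine ⟨hfix, ?_⟩
  intro M hM
  have hiter : ∀ (i : ℕ) (t : ℝ), |φ^[i] t| ≤ max c (|t| - 2 * c * i) := by
    intro i
    induction i with
    | zero => intro t; simp [le_max_iff]
    | succ n ih =>
      intro t
      rw [Function.iterate_succ_apply]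
      have hφt : |φ t| ≤ max c (|t| - 2 * c) := key8 c hc t
      have hn : (0:ℝ) ≤ 2 * c * n := by positivity
      calc |φ^[n] (φ t)| ≤ max c (|φ t| - 2 * c * n) := ih (φ t)
        _ ≤ max c (|t| - 2 * c * ((n:ℝ) + 1)) := by
            rcases le_max_iff.1 hφt with h | h <;>
            apply max_le (le_max_left _ _) <;> rw [le_max_iff]
            · left; linarith
            · right; linarith
        _ = max c (|t| - 2 * c * ((n + 1 : ℕ):ℝ)) := by push_cast; ring_nf
  refine ⟨⌈M / (2 * c)⌉₊, fun i hi t ht => ?_⟩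
  have h1 := hiter i t
  have h2 : M ≤ 2 * c * i := by
    have h3 : M / (2 * c) ≤ (i:ℝ) := le_trans (Nat.le_ceil _) (by exact_mod_cast hi)
    calc M = (M / (2 * c)) * (2 * c) := by field_simp
      _ ≤ i * (2 * c) := by nlinarith
      _ = 2 * c * i := by ring
  rcases le_max_iff.1 h1 with h | h
  · exact h
  · linarith
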